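/- arXiv:2210.03964 — 3 statements merged into one kernel-verified Lean document; each statement's English description precedes it below -/
import Mathlib

section
/- Let K : ℝ_{>A} → ℝ_{>0} (A < 0) be continuous and strictly decreasing with K(0) = 1, such that t^{n−1}K(t) is integrable on (0,∞) but t^{n−1}K(t) is not integrable in a neighborhood of A. Then for every l > 0 and every α > 0, there exists a unique β > A/l such that ∫₀^l t^{n−1} K(β t) dt = α. -/
open MeasureTheory

/-- Existence and uniqueness of the radial bandwidth `β(l)`: for every `l > 0` and `α > 0`
there is a unique `β > A/l` with `∫₀^l t^{n−1} K(βt) dt = α`. -/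
theorem beta_exists_unique (n : ℕ) (hn : 1 ≤ n) (A : ℝ) (hA : A < 0)
    (K : ℝ → ℝ)
    (hKcont : ContinuousOn K (Set.Ioi A))
    (hKanti : StrictAntiOn K (Set.Ioi A))
    (hKpos : ∀ t ∈ Set.Ioi A, 0 < K t)
    (hK0 : K 0 = 1)
    (hKint : IntegrableOn (fun t : ℝ => t ^ (n - 1) * K t) (Set.Ioi 0))
    (hKnint : ∀ δ > 0, ¬ IntegrableOn (fun t : ℝ => |t| ^ (n - 1) * K t) (Set.Ioo A (A + δ))) :
    ∀ l > 0, ∀ α > 0, ∃! b : ℝ,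
      A / l < b ∧ ∫ t in Set.Ioo 0 l, t ^ (n - 1) * K (b * t) = α := by
  intro l hl α hα
  set c : ℝ := A / l with hc
  have hc0 : c < 0 := div_neg_of_neg_of_pos hA hl
  have hcl : c * l = A := div_mul_cancel₀ A hl.ne'
  set g : ℝ → ℝ → ℝ := fun b t => t ^ (n - 1) * K (b * t) with hgdef
  set F : ℝ → ℝ := fun b => ∫ t in Set.Ioo 0 l, g b t with hFdef
  -- membership of b*t in Ioi A
  have hmem : ∀ b : ℝ, c < b → ∀ t ∈ Set.Icc (0:ℝ) l, b * t ∈ Set.Ioi A := by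
    intro b hb t ht
    rcases le_or_gt 0 b with h0 | h0
    · exact lt_of_lt_of_le hA (mul_nonneg h0 ht.1)
    · have h1 : b * l ≤ b * t := mul_le_mul_of_nonpos_left ht.2 h0.le
      have hbl : A < b * l := by
        calc A = c * l := hcl.symm
        _ < b * l := mul_lt_mul_of_pos_right hb hl
      exact lt_of_lt_of_le hbl h1
  have hgcont : ∀ b : ℝ, c < b → ContinuousOn (g b) (Set.Icc 0 l) := by
    intro b hb
    exact ((continuous_pow _).continuousOn).mul
      (hKcont.comp ((continuous_const.mul continuous_id).continuousOn)
        (fun t ht => hmem b hb t ht))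
  have hgint : ∀ b : ℝ, c < b → IntegrableOn (g b) (Set.Ioo 0 l) := fun b hb =>
    ((hgcont b hb).integrableOn_Icc).mono_set Set.Ioo_subset_Icc_self
  have hgII : ∀ b : ℝ, c < b → IntervalIntegrable (g b) volume 0 l := by
    intro b hb
    apply ContinuousOn.intervalIntegrable
    rw [Set.uIcc_of_le hl.le]; exact hgcont b hb
  have hFi : ∀ b : ℝ, F b = ∫ t in (0:ℝ)..l, g b t := by
    intro b
    rw [intervalIntegral.integral_of_le hl.le, integral_Ioc_eq_integral_Ioo]
  -- strict antitonicity
  have hFanti : StrictAntiOn F (Set.Ioi c) := by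
    intro b₁ hb₁ b₂ hb₂ h12
    have key : 0 < ∫ t in (0:ℝ)..l, (g b₁ t - g b₂ t) := by
      apply intervalIntegral.intervalIntegral_pos_of_pos_on
        ((hgII b₁ hb₁).sub (hgII b₂ hb₂)) _ hl
      intro t ht
      have htI : t ∈ Set.Icc (0:ℝ) l := Set.mem_Icc_of_Ioo ht
      have h1 : b₁ * t < b₂ * t := mul_lt_mul_of_pos_right h12 ht.1
      have hK : K (b₂ * t) < K (b₁ * t) :=
        hKanti (hmem b₁ hb₁ t htI) (hmem b₂ hb₂ t htI) h1
      have : g b₂ t < g b₁ t :=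
        mul_lt_mul_of_pos_left hK (pow_pos ht.1 _)
      linarith
    rw [intervalIntegral.integral_sub (hgII b₁ hb₁) (hgII b₂ hb₂)] at key
    rw [hFi b₁, hFi b₂] at *
    linarith
  -- continuity
  have hFcont : ∀ b₀ : ℝ, c < b₀ → ContinuousAt F b₀ := by
    intro b₀ hb₀
    set bm : ℝ := (c + b₀) / 2 with hbmdef
    have hcb : c < bm := by simp only [hbmdef]; linarith
    have hbb : bm < b₀ := by simp only [hbmdef]; linarith
    have hev : ∀ᶠ x in nhds b₀, x ∈ Set.Ioi bm := isOpen_Ioi.eventually_mem hbb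
    apply continuousAt_of_dominated (bound := g bm)
    · filter_upwards [hev] with x hx
      exact ((hgcont x (hcb.trans hx)).mono Set.Ioo_subset_Icc_self).aestronglyMeasurable
        measurableSet_Ioo
    · filter_upwards [hev] with x hx
      filter_upwards [ae_restrict_mem measurableSet_Ioo] with t ht
      have htI : t ∈ Set.Icc (0:ℝ) l := Set.mem_Icc_of_Ioo ht
      have hgx : 0 ≤ g x t :=
        mul_nonneg (pow_nonneg ht.1.le _) (hKpos _ (hmem x (hcb.trans hx) t htI)).le
      rw [Real.norm_eq_abs, abs_of_nonneg hgx]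
      have h1 : bm * t < x * t := mul_lt_mul_of_pos_right hx ht.1
      exact mul_le_mul_of_nonneg_left
        (hKanti (hmem bm hcb t htI) (hmem x (hcb.trans hx) t htI) h1).le
        (pow_nonneg ht.1.le _)
    · exact hgint bm hcb
    · filter_upwards [ae_restrict_mem measurableSet_Ioo] with t ht
      have htI : t ∈ Set.Icc (0:ℝ) l := Set.mem_Icc_of_Ioo ht
      have hKc : ContinuousAt K (b₀ * t) :=
        hKcont.continuousAt (isOpen_Ioi.mem_nhds (hmem b₀ hb₀ t htI))
      have h2 : ContinuousAt (fun x : ℝ => x * t) b₀ := (continuous_mul_right t).continuousAt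
      have h3 : ContinuousAt (K ∘ fun x : ℝ => x * t) b₀ := ContinuousAt.comp (f := fun x : ℝ => x * t) hKc h2
      exact continuousAt_const.mul h3
  -- substitution formula
  have hsub : ∀ b : ℝ, b ≠ 0 →
      F b = (b ^ n)⁻¹ * ∫ s in (0:ℝ)..(b * l), s ^ (n - 1) * K s := by
    intro b hb
    have hbp : (b:ℝ) ^ (n - 1) ≠ 0 := pow_ne_zero _ hb
    have h1 : ∀ t : ℝ, g b t = (b ^ (n - 1))⁻¹ * ((b * t) ^ (n - 1) * K (b * t)) := by
      intro t
      simp only [hgdef]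
      rw [mul_pow, ← mul_assoc, inv_mul_cancel_left₀ hbp]
    rw [hFi b]
    calc (∫ t in (0:ℝ)..l, g b t)
        = ∫ t in (0:ℝ)..l, (b ^ (n - 1))⁻¹ * ((b * t) ^ (n - 1) * K (b * t)) := by
          simp_rw [h1]
      _ = (b ^ (n - 1))⁻¹ * ∫ t in (0:ℝ)..l, ((b * t) ^ (n - 1) * K (b * t)) := by
          rw [intervalIntegral.integral_const_mul]
      _ = (b ^ (n - 1))⁻¹ * (b⁻¹ • ∫ s in (b * 0)..(b * l), s ^ (n - 1) * K s) := by
          rw [intervalIntegral.integral_comp_mul_left (fun s => s ^ (n - 1) * K s) hb]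
      _ = (b ^ n)⁻¹ * ∫ s in (0:ℝ)..(b * l), s ^ (n - 1) * K s := by
          rw [mul_zero, smul_eq_mul, ← mul_assoc, ← mul_inv]
          congr 3
          rw [← pow_succ, Nat.sub_add_cancel hn]
  -- large b: F b₂ < α
  have hlarge : ∃ b₂ : ℝ, c < b₂ ∧ F b₂ < α := by
    set C : ℝ := ∫ s in Set.Ioi (0:ℝ), s ^ (n - 1) * K s with hC
    have hC0 : 0 ≤ C := setIntegral_nonneg measurableSet_Ioi
      (fun s hs => mul_nonneg (pow_nonneg (le_of_lt hs) _) (hKpos s (hA.trans hs)).le)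
    set b₂ : ℝ := max 1 (C / α + 1) with hb₂
    have hb1 : (1:ℝ) ≤ b₂ := le_max_left _ _
    have hb0 : (0:ℝ) < b₂ := lt_of_lt_of_le one_pos hb1
    refine ⟨b₂, lt_trans hc0 hb0, ?_⟩
    have hbl0 : (0:ℝ) < b₂ * l := mul_pos hb0 hl
    have hIeq : (∫ s in (0:ℝ)..(b₂ * l), s ^ (n - 1) * K s)
        = ∫ s in Set.Ioo 0 (b₂ * l), s ^ (n - 1) * K s := by
      rw [intervalIntegral.integral_of_le hbl0.le, integral_Ioc_eq_integral_Ioo]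
    have hle : (∫ s in Set.Ioo 0 (b₂ * l), s ^ (n - 1) * K s) ≤ C := by
      apply setIntegral_mono_set hKint
      · filter_upwards [ae_restrict_mem measurableSet_Ioi] with s hs
        exact mul_nonneg (pow_nonneg (le_of_lt hs) _) (hKpos s (hA.trans hs)).le
      · exact HasSubset.Subset.eventuallyLE Set.Ioo_subset_Ioi_self
    rw [hsub b₂ hb0.ne', hIeq]
    have hpow : b₂ ≤ b₂ ^ n := le_self_pow₀ hb1 (by omega)
    have hpn : (0:ℝ) < b₂ ^ n := pow_pos hb0 n
    have h2 : (b₂ ^ n)⁻¹ * (∫ s in Set.Ioo 0 (b₂ * l), s ^ (n - 1) * K s)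
        ≤ (b₂ ^ n)⁻¹ * C :=
      mul_le_mul_of_nonneg_left hle (inv_nonneg.mpr hpn.le)
    have h3 : (b₂ ^ n)⁻¹ * C ≤ b₂⁻¹ * C :=
      mul_le_mul_of_nonneg_right (inv_anti₀ hb0 hpow) hC0
    have h4 : b₂⁻¹ * C < α := by
      have h5 : C / α < b₂ := lt_of_lt_of_le (lt_add_one _) (le_max_right _ _)
      have h6 : C < α * b₂ := by
        have := mul_lt_mul_of_pos_left h5 hα
        calc C = α * (C / α) := by field_simp
          _ < α * b₂ := this
      rw [inv_mul_lt_iff₀ hb0]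
      linarith [h6]
    linarith
  -- small b: α ≤ F b₁
  have hsmall : ∃ b₁ : ℝ, c < b₁ ∧ α ≤ F b₁ := by
    by_contra hcon
    push_neg at hcon
    set h' : ℝ → ℝ := fun s => |s| ^ (n - 1) * K s with hh'
    have hh'cont : ContinuousOn h' (Set.Ioi A) :=
      ((continuous_abs.pow _).continuousOn).mul hKcont
    set bk : ℕ → ℝ := fun k => c + (-c) / (k + 2) with hbk
    have hbkc : ∀ k : ℕ, c < bk k := by
      intro k
      have : (0:ℝ) < (-c) / (k + 2) := div_pos (by linarith) (by positivity)
      simp only [hbk]; linarith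
    have hbkneg : ∀ k : ℕ, bk k < 0 := by
      intro k
      have h2 : (-c) / (k + 2 : ℝ) ≤ (-c) / 2 :=
        div_le_div_of_nonneg_left (by linarith) two_pos (by norm_num)
      simp only [hbk]; linarith
    have hbkanti : ∀ k m : ℕ, k ≤ m → bk m ≤ bk k := by
      intro k m hkm
      have h2 : (-c) / (m + 2 : ℝ) ≤ (-c) / (k + 2 : ℝ) := by
        apply div_le_div_of_nonneg_left (by linarith) (by positivity)
        exact_mod_cast by omega
      simp only [hbk]; linarith
    have hbkl : ∀ k : ℕ, A < bk k * l := by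
      intro k
      calc A = c * l := hcl.symm
        _ < bk k * l := mul_lt_mul_of_pos_right (hbkc k) hl
    have hsubIoi : ∀ k : ℕ, Set.Ioo (bk k * l) 0 ⊆ Set.Ioi A :=
      fun k s hs => (hbkl k).trans hs.1
    have hh'contk : ∀ k : ℕ, ContinuousOn h' (Set.Icc (bk k * l) 0) := fun k =>
      hh'cont.mono (fun s hs => lt_of_lt_of_le (hbkl k) hs.1)
    have hh'int : ∀ k : ℕ, IntegrableOn h' (Set.Ioo (bk k * l) 0) := fun k =>
      ((hh'contk k).integrableOn_Icc).mono_set Set.Ioo_subset_Icc_self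
    have hh'nn : ∀ k : ℕ, 0 ≤ᵐ[volume.restrict (Set.Ioo (bk k * l) 0)] h' := by
      intro k
      filter_upwards [ae_restrict_mem measurableSet_Ioo] with s hs
      exact mul_nonneg (pow_nonneg (abs_nonneg s) _) (hKpos s (hsubIoi k hs)).le
    -- the integral bound from F (bk k) < α
    have hbound : ∀ k : ℕ, (∫ s in Set.Ioo (bk k * l) 0, h' s) ≤ α * (-c) ^ n := by
      intro k
      have hb := hbkc k
      have hbn := hbkneg k
      have hFk := hcon (bk k) hb
      set e : ℝ := (-1 : ℝ) ^ (n - 1) with he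
      have he2 : e * e = 1 := by rw [he, ← mul_pow]; norm_num
      have heq : F (bk k) = ((-(bk k)) ^ n)⁻¹ * ∫ s in Set.Ioo (bk k * l) 0, h' s := by
        rw [hsub _ hbn.ne]
        have hbl : bk k * l < 0 := mul_neg_of_neg_of_pos hbn hl
        rw [intervalIntegral.integral_symm, intervalIntegral.integral_of_le hbl.le,
          integral_Ioc_eq_integral_Ioo]
        have hcongr : (∫ s in Set.Ioo (bk k * l) 0, s ^ (n - 1) * K s)
            = e * ∫ s in Set.Ioo (bk k * l) 0, h' s := by
          rw [← integral_const_mul]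
          apply setIntegral_congr_fun measurableSet_Ioo
          intro s hs
          have hsneg : s < 0 := hs.2
          simp only [hh', he]
          rw [abs_of_neg hsneg, ← mul_assoc, ← mul_pow]
          norm_num
        rw [hcongr]
        have hsign : (-(bk k)) ^ n = -e * (bk k) ^ n := by
          have hn' : (-1:ℝ) ^ n = -e := by
            rw [he]
            conv_lhs => rw [← Nat.sub_add_cancel hn]
            rw [pow_succ]
            ring
          rw [neg_pow, hn']
        have hbn0 : (bk k) ^ n ≠ 0 := pow_ne_zero _ hbn.ne
        have hinv : ((-(bk k)) ^ n)⁻¹ = -e * ((bk k) ^ n)⁻¹ := by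
          rw [hsign, mul_inv]
          congr 1
          exact inv_eq_of_mul_eq_one_left (by rw [neg_mul_neg, he2])
        rw [hinv]
        ring
      have hX : (0:ℝ) < (-(bk k)) ^ n := pow_pos (by linarith) n
      have hIk : (∫ s in Set.Ioo (bk k * l) 0, h' s) = (-(bk k)) ^ n * F (bk k) := by
        rw [heq, ← mul_assoc, mul_inv_cancel₀ hX.ne', one_mul]
      have hcc : (-(bk k)) ^ n ≤ (-c) ^ n :=
        pow_le_pow_left₀ (by linarith) (by linarith [hbkc k]) n
      have hF0 : 0 ≤ F (bk k) := by
        apply setIntegral_nonneg measurableSet_Ioo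
        intro t ht
        exact mul_nonneg (pow_nonneg ht.1.le _)
          (hKpos _ (hmem _ hb t (Set.mem_Icc_of_Ioo ht))).le
      calc (∫ s in Set.Ioo (bk k * l) 0, h' s) = (-(bk k)) ^ n * F (bk k) := hIk
        _ ≤ (-c) ^ n * F (bk k) := mul_le_mul_of_nonneg_right hcc hF0
        _ ≤ (-c) ^ n * α := mul_le_mul_of_nonneg_left hFk.le (pow_nonneg (by linarith) n)
        _ = α * (-c) ^ n := mul_comm _ _
    -- monotone convergence
    set M : ℝ := α * (-c) ^ n with hM
    set f : ℕ → ℝ → ENNReal :=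
      fun k => (Set.Ioo (bk k * l) 0).indicator (fun s => ENNReal.ofReal (h' s)) with hf
    have hlintk : ∀ k : ℕ, (∫⁻ s, f k s) ≤ ENNReal.ofReal M := by
      intro k
      simp only [hf]
      rw [lintegral_indicator measurableSet_Ioo,
        ← ofReal_integral_eq_lintegral_ofReal (hh'int k) (hh'nn k)]
      exact ENNReal.ofReal_le_ofReal (hbound k)
    have hmono : ∀ s : ℝ, Monotone fun k => f k s := by
      intro s k m hkm
      simp only [hf]
      apply Set.indicator_le_indicator_of_subset
      · intro x hx
        exact ⟨lt_of_le_of_lt (mul_le_mul_of_nonneg_right (hbkanti k m hkm) hl.le) hx.1, hx.2⟩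
      · intro x; exact zero_le
    have hsup : ∀ s : ℝ,
        (⨆ k, f k s) = (Set.Ioo A 0).indicator (fun s => ENNReal.ofReal (h' s)) s := by
      intro s
      by_cases hs : s ∈ Set.Ioo A 0
      · rw [Set.indicator_of_mem hs]
        apply le_antisymm
        · exact iSup_le fun k => (Set.indicator_le_self _ _) s
        · obtain ⟨N, hN⟩ := exists_nat_gt ((-A) / (s - A))
          have hsA : (0:ℝ) < s - A := by have := hs.1; linarith
          have hbkl' : bk N * l = A + (-A) / (N + 2) := by
            simp only [hbk, add_mul, div_mul_eq_mul_div, neg_mul, hcl]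
          have h2 : (-A) / (N + 2 : ℝ) < s - A := by
            rw [div_lt_iff₀ (by positivity)]
            have h1 : (-A) < (N:ℝ) * (s - A) := (div_lt_iff₀ hsA).mp hN
            nlinarith
          have hsk : s ∈ Set.Ioo (bk N * l) 0 := ⟨by rw [hbkl']; linarith, hs.2⟩
          refine le_iSup_of_le N ?_
          simp only [hf]
          rw [Set.indicator_of_mem hsk]
      · rw [Set.indicator_of_notMem hs]
        refine le_antisymm (iSup_le fun k => ?_) zero_le
        simp only [hf]
        rw [Set.indicator_of_notMem]
        intro hx
        exact hs ⟨(hbkl k).trans hx.1, hx.2⟩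
    have hmeas : ∀ k : ℕ, AEMeasurable (f k) volume := by
      intro k
      simp only [hf]
      rw [aemeasurable_indicator_iff measurableSet_Ioo]
      exact ENNReal.measurable_ofReal.comp_aemeasurable
        (((hh'contk k).mono Set.Ioo_subset_Icc_self).aemeasurable measurableSet_Ioo)
    have hMCT := lintegral_iSup' hmeas (Filter.Eventually.of_forall hmono)
    have hfin : (∫⁻ s in Set.Ioo A 0, ENNReal.ofReal (h' s)) ≤ ENNReal.ofReal M := by
      rw [← lintegral_indicator measurableSet_Ioo]
      calc (∫⁻ s, (Set.Ioo A 0).indicator (fun s => ENNReal.ofReal (h' s)) s)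
          = ∫⁻ s, ⨆ k, f k s := by simp_rw [hsup]
        _ = ⨆ k, ∫⁻ s, f k s := hMCT
        _ ≤ ENNReal.ofReal M := iSup_le hlintk
    have hIoo : IntegrableOn h' (Set.Ioo A 0) := by
      constructor
      · exact (hh'cont.mono Set.Ioo_subset_Ioi_self).aestronglyMeasurable measurableSet_Ioo
      · rw [hasFiniteIntegral_iff_ofReal]
        · exact lt_of_le_of_lt hfin ENNReal.ofReal_lt_top
        · filter_upwards [ae_restrict_mem measurableSet_Ioo] with s hs
          exact mul_nonneg (pow_nonneg (abs_nonneg s) _) (hKpos s hs.1).le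
    exact hKnint (-A) (by linarith) (by simpa using hIoo)
  obtain ⟨b₂, hb₂c, hb₂α⟩ := hlarge
  obtain ⟨b₁, hb₁c, hb₁α⟩ := hsmall
  have h12 : b₁ < b₂ := by
    by_contra h
    push_neg at h
    rcases eq_or_lt_of_le h with h | h
    · rw [h] at hb₂α; linarith
    · have := hFanti hb₂c hb₁c h
      linarith
  have hFcOn : ContinuousOn F (Set.Icc b₁ b₂) := fun x hx =>
    (hFcont x (lt_of_lt_of_le hb₁c hx.1)).continuousWithinAt
  have hmemIcc : α ∈ Set.Icc (F b₂) (F b₁) := ⟨hb₂α.le, hb₁α⟩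
  obtain ⟨b, hb, hFb⟩ := intermediate_value_Icc' h12.le hFcOn hmemIcc
  have hbc : c < b := lt_of_lt_of_le hb₁c hb.1
  refine ⟨b, ⟨hbc, hFb⟩, ?_⟩
  rintro y ⟨hyc, hy⟩
  exact hFanti.injOn hyc hbc (by rw [show F y = _ from rfl]; exact hy.trans hFb.symm)
end

section
/- The function β(l) defined by ∫₀^l t^{n−1} K(β(l) t) dt = α satisfies lim_{l→+∞} β(l) = ( (1/α) ∫₀^∞ t^{n−1} K(t) dt )^{1/n}. -/
open MeasureTheory

/-- Horizontal asymptote: `β(l) → ((1/α) ∫₀^∞ t^{n−1}K(t) dt)^{1/n}` as `l → +∞`. -/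
theorem beta_asymptote (n : ℕ) (hn : 1 ≤ n) (A : ℝ) (hA : A < 0) (α : ℝ) (hα : 0 < α)
    (K : ℝ → ℝ)
    (hKcont : ContinuousOn K (Set.Ioi A))
    (hKanti : StrictAntiOn K (Set.Ioi A))
    (hKpos : ∀ t ∈ Set.Ioi A, 0 < K t)
    (hK0 : K 0 = 1)
    (hKint : IntegrableOn (fun t : ℝ => t ^ (n - 1) * K t) (Set.Ioi 0))
    (hKnint : ∀ δ > 0, ¬ IntegrableOn (fun t : ℝ => |t| ^ (n - 1) * K t) (Set.Ioo A (A + δ)))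
    (β : ℝ → ℝ)
    (hβdom : ∀ l > 0, A / l < β l)
    (hβ : ∀ l > 0, ∫ t in Set.Ioo 0 l, t ^ (n - 1) * K (β l * t) = α) :
    Filter.Tendsto β Filter.atTop
      (nhds ((α⁻¹ * ∫ t in Set.Ioi 0, t ^ (n - 1) * K t) ^ ((n : ℝ)⁻¹))) := by
  have hn' : n ≠ 0 := by omega
  have hnR : (0:ℝ) < n := by exact_mod_cast Nat.pos_of_ne_zero hn'
  set f : ℝ → ℝ := fun t => t ^ (n - 1) * K t with hf
  set I : ℝ := ∫ t in Set.Ioi 0, t ^ (n - 1) * K t with hI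
  -- antitone version of K
  have hKmono : ∀ x ∈ Set.Ioi A, ∀ y ∈ Set.Ioi A, x ≤ y → K y ≤ K x := by
    intro x hx y hy hxy
    rcases hxy.eq_or_lt with h | h
    · rw [h]
    · exact (hKanti hx hy h).le
  -- positivity of I
  have hIpos : 0 < I := by
    rw [hI, setIntegral_pos_iff_support_of_nonneg_ae ?_ hKint]
    · refine lt_of_lt_of_le ?_ (measure_mono (s := Set.Ioi (1:ℝ)) ?_)
      · simp [Real.volume_Ioi]
      · intro t ht
        have ht0 : (0:ℝ) < t := lt_trans one_pos ht
        have hKt : 0 < K t := hKpos t (lt_trans hA ht0)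
        refine ⟨?_, ht0⟩
        simp only [Function.mem_support]
        positivity
    · refine (ae_restrict_iff' measurableSet_Ioi).2 (Filter.Eventually.of_forall ?_)
      intro t ht
      have hKt : 0 < K t := hKpos t (lt_trans hA ht)
      have ht0 : (0:ℝ) < t := ht
      positivity
  -- integrability of the integrand in the defining equation
  have hint : ∀ l, 0 < l → IntegrableOn (fun t => t ^ (n - 1) * K (β l * t)) (Set.Ioo 0 l) := by
    intro l hl
    by_contra h
    have := integral_undef (μ := volume.restrict (Set.Ioo 0 l)) h
    rw [hβ l hl] at this
    exact hα.ne' this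
  have hintpow : ∀ l : ℝ, IntegrableOn (fun t : ℝ => t ^ (n - 1)) (Set.Ioo 0 l) :=
    fun l => ((continuous_pow (n-1)).integrableOn_Icc (a := 0) (b := l)).mono_set
      Set.Ioo_subset_Icc_self
  -- monomial integral
  have hmono_int : ∀ l : ℝ, 0 < l → ∫ t in Set.Ioo 0 l, t ^ (n - 1) = l ^ n / n := by
    intro l hl
    rw [← integral_Ioc_eq_integral_Ioo, ← intervalIntegral.integral_of_le hl.le,
      integral_pow, Nat.sub_add_cancel hn]
    have : ((n - 1 : ℕ) : ℝ) + 1 = n := by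
      rw [Nat.cast_sub hn]; push_cast; ring
    rw [this, zero_pow hn']
    ring
  -- positivity of β l for large l
  have hpos : ∀ l : ℝ, 0 < l → α < l ^ n / n → 0 < β l := by
    intro l hl hαl
    by_contra hb0
    push_neg at hb0
    have hbl : A < β l * l := (div_lt_iff₀ hl).1 (hβdom l hl)
    have hle : ∫ t in Set.Ioo 0 l, t ^ (n - 1) ≤
        ∫ t in Set.Ioo 0 l, t ^ (n - 1) * K (β l * t) := by
      refine setIntegral_mono_on (hintpow l) (hint l hl) measurableSet_Ioo ?_
      intro t ht
      have htl : β l * l ≤ β l * t := mul_le_mul_of_nonpos_left ht.2.le hb0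
      have ht0 : β l * t ≤ 0 := mul_nonpos_of_nonpos_of_nonneg hb0 ht.1.le
      have hmem : β l * t ∈ Set.Ioi A := lt_of_lt_of_le hbl htl
      have h1 : 1 ≤ K (β l * t) := by
        rw [← hK0]; exact hKmono _ hmem 0 hA ht0
      calc t ^ (n-1) = t ^ (n-1) * 1 := (mul_one _).symm
        _ ≤ t ^ (n-1) * K (β l * t) :=
          mul_le_mul_of_nonneg_left h1 (pow_nonneg ht.1.le _)
    rw [hβ l hl, hmono_int l hl] at hle
    linarith
  -- substitution identity
  have hsub : ∀ l : ℝ, 0 < l → 0 < β l →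
      (∫ s in (0:ℝ)..(β l * l), f s) = β l ^ n * α := by
    intro l hl hb
    have h1 := intervalIntegral.smul_integral_comp_mul_left (a := (0:ℝ)) (b := l) f (β l)
    rw [mul_zero] at h1
    rw [← h1]
    have h2 : (∫ t in (0:ℝ)..l, f (β l * t)) =
        ∫ t in (0:ℝ)..l, β l ^ (n-1) * (t ^ (n-1) * K (β l * t)) := by
      refine intervalIntegral.integral_congr fun t _ => ?_
      simp only [hf, mul_pow]
      ring
    rw [h2, intervalIntegral.integral_const_mul, intervalIntegral.integral_of_le hl.le,
      integral_Ioc_eq_integral_Ioo, hβ l hl, smul_eq_mul]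
    rw [← mul_assoc, ← pow_succ', Nat.sub_add_cancel hn]
  -- β l * l → ∞
  have hbl_top : Filter.Tendsto (fun l => β l * l) Filter.atTop Filter.atTop := by
    rw [Filter.tendsto_atTop]
    intro M
    set M' := max M 1 with hM'def
    have hM1 : (1:ℝ) ≤ M' := le_max_right _ _
    have hM'A : M' ∈ Set.Ioi A := lt_trans hA (lt_of_lt_of_le one_pos hM1)
    have hKM' : 0 < K M' := hKpos M' hM'A
    have e1 := (Filter.tendsto_pow_atTop hn' (α := ℝ)).eventually_gt_atTop (n * α)
    have e2 := (Filter.tendsto_pow_atTop hn' (α := ℝ)).eventually_gt_atTop (n * α / K M')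
    filter_upwards [e1, e2, Filter.eventually_gt_atTop (0:ℝ)] with l h1 h2 hl
    have hαl : α < l ^ n / n := by
      rw [lt_div_iff₀ hnR]; linarith
    have hb := hpos l hl hαl
    by_contra hcon
    push_neg at hcon
    have hblM : β l * l < M' := lt_of_lt_of_le hcon (le_max_left _ _)
    -- then α ≥ K M' * l^n / n, contradiction
    have hle : ∫ t in Set.Ioo 0 l, t ^ (n - 1) * K M' ≤
        ∫ t in Set.Ioo 0 l, t ^ (n - 1) * K (β l * t) := by
      refine setIntegral_mono_on ((hintpow l).mul_const _) (hint l hl) measurableSet_Ioo ?_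
      intro t ht
      have htl : β l * t ≤ M' :=
        le_of_lt (lt_of_le_of_lt (mul_le_mul_of_nonneg_left ht.2.le hb.le) hblM)
      have hmem : β l * t ∈ Set.Ioi A :=
        lt_trans hA (mul_pos hb ht.1)
      exact mul_le_mul_of_nonneg_left (hKmono _ hmem _ hM'A htl) (pow_nonneg ht.1.le _)
    rw [hβ l hl, integral_mul_const, hmono_int l hl] at hle
    have : n * α / K M' < l ^ n := h2
    rw [div_lt_iff₀ hKM'] at this
    have : α < l ^ n / n * K M' := by
      rw [div_mul_eq_mul_div, lt_div_iff₀ hnR]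
      nlinarith
    linarith
  -- limit of the improper integral
  have hFtend : Filter.Tendsto (fun l => ∫ s in (0:ℝ)..(β l * l), f s)
      Filter.atTop (nhds I) :=
    intervalIntegral_tendsto_integral_Ioi 0 hKint hbl_top
  -- eventual positivity of β
  have hevpos : ∀ᶠ l in Filter.atTop, 0 < l ∧ 0 < β l := by
    have e1 := (Filter.tendsto_pow_atTop hn' (α := ℝ)).eventually_gt_atTop (n * α)
    filter_upwards [e1, Filter.eventually_gt_atTop (0:ℝ)] with l h1 hl
    exact ⟨hl, hpos l hl (by rw [lt_div_iff₀ hnR]; linarith)⟩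
  -- limit of β l ^ n
  have hpow_tend : Filter.Tendsto (fun l => β l ^ n) Filter.atTop (nhds (α⁻¹ * I)) := by
    refine (hFtend.const_mul α⁻¹).congr' ?_
    filter_upwards [hevpos] with l ⟨hl, hb⟩
    rw [hsub l hl hb]
    field_simp
  have hItarget : 0 < α⁻¹ * I := mul_pos (inv_pos.2 hα) hIpos
  have hrpow : Filter.Tendsto (fun l => (β l ^ n : ℝ) ^ ((n:ℝ)⁻¹))
      Filter.atTop (nhds ((α⁻¹ * I) ^ ((n:ℝ)⁻¹))) :=
    (Real.continuousAt_rpow_const _ _ (Or.inl hItarget.ne')).tendsto.comp hpow_tend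
  refine Filter.Tendsto.congr' ?_ hrpow
  filter_upwards [hevpos] with l ⟨hl, hb⟩
  exact Real.pow_rpow_inv_natCast hb.le hn'
end

section
/- Let ε = (nα)^{1/n} and let p, q ∈ P be such that m = (p+q)/2 ∈ C(p) ∩ C(q) and d(p,q) < 2ε. Then for x in the segment from p to m, l(x) = d(p,q)/2 < ε, so β(l(x)) < 0, and hence the RVDE density f_P(x) = K(β(l(x)) d(x,p))/(α|P|Vol(S^{n−1})) is strictly increasing in d(x,p) along the segment; in particular f_P(m) > f_P(p). -/
open MeasureTheory

/-- If `m = (p+q)/2 ∈ C(p) ∩ C(q)` and `d(p,q) < 2ε` with `ε = (nα)^{1/n}`, then along the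
segment from `p` to `m` we have `l(x) = d(p,q)/2 < ε`, hence `β(l(x)) < 0`, the RVDE density
is strictly increasing in `d(x,p)` along the segment, and in particular `f_P(m) > f_P(p)`. -/
theorem rvde_mode_at_midpoint (n : ℕ) (hn : 1 ≤ n) (A α V : ℝ)
    (hA : A < 0) (hα : 0 < α) (hV : 0 < V)
    (K : ℝ → ℝ)
    (hKanti : StrictAntiOn K (Set.Ioi A))
    (hK0 : K 0 = 1)
    (hKpos : ∀ t ∈ Set.Ioi A, 0 < K t)
    (β : ℝ → ℝ)
    (hβdom : ∀ r > 0, A / r < β r)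
    (hβ : ∀ r > 0, ∫ t in Set.Ioo 0 r, t ^ (n - 1) * K (β r * t) = α)
    (P : Finset (EuclideanSpace ℝ (Fin n))) (p q : EuclideanSpace ℝ (Fin n))
    (hp : p ∈ P) (hq : q ∈ P) (hpq : p ≠ q)
    (C : EuclideanSpace ℝ (Fin n) → Set (EuclideanSpace ℝ (Fin n)))
    (hC : ∀ r, C r = {x | ∀ s ∈ P, dist x r ≤ dist x s})
    (l : EuclideanSpace ℝ (Fin n) → ℝ)
    (hl : ∀ x, l x = sSup {t : ℝ | 0 ≤ t ∧ p + t • (‖x - p‖⁻¹ • (x - p)) ∈ C p})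
    (f : EuclideanSpace ℝ (Fin n) → ℝ)
    (hf : ∀ x, f x = K (β (l x) * dist x p) / (α * (P.card : ℝ) * V))
    (ε : ℝ) (hε : ε = ((n : ℝ) * α) ^ ((n : ℝ)⁻¹))
    (m : EuclideanSpace ℝ (Fin n)) (hm : m = midpoint ℝ p q)
    (hmem : m ∈ C p ∩ C q) (hdist : dist p q < 2 * ε) :
    (∀ x ∈ segment ℝ p m, x ≠ p → l x = dist p q / 2 ∧ l x < ε ∧ β (l x) < 0) ∧
    (∀ x ∈ segment ℝ p m, ∀ y ∈ segment ℝ p m, dist x p < dist y p → f x < f y) ∧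
    f p < f m := by
  have hd : (0:ℝ) < dist p q := dist_pos.mpr hpq
  set d := dist p q with hdd
  set r := d / 2 with hrdef
  have hr : 0 < r := by positivity
  have hrε : r < ε := by rw [hrdef]; linarith
  have hcard : (0:ℝ) < (P.card : ℝ) := by
    exact_mod_cast Finset.card_pos.mpr ⟨p, hp⟩
  have hD : (0:ℝ) < α * (P.card : ℝ) * V := by positivity
  -- geometry
  have hmp : m - p = (2⁻¹ : ℝ) • (q - p) := by
    rw [hm, midpoint_eq_smul_add, invOf_eq_inv]
    module
  have hnmp : ‖m - p‖ = r := by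
    rw [hmp, norm_smul, hrdef, hdd, dist_eq_norm, norm_sub_rev p q]
    simp [abs_of_nonneg]
    ring
  have hq2 : q - p = (2:ℝ) • (m - p) := by rw [hmp]; module
  -- l x = r for x in segment, x ≠ p
  have hlx : ∀ x ∈ segment ℝ p m, x ≠ p → l x = r := by
    intro x hx hxp
    obtain ⟨a, b, ha, hb, hab, rfl⟩ := hx
    have haeq : a = 1 - b := by linarith
    subst haeq
    have hxpb : (1 - b) • p + b • m - p = b • (m - p) := by module
    have hbne : b ≠ 0 := by
      intro h
      apply hxp
      rw [h]; module
    have hbpos : 0 < b := lt_of_le_of_ne hb (Ne.symm hbne)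
    have hnx : ‖(1 - b) • p + b • m - p‖ = b * r := by
      rw [hxpb, norm_smul, Real.norm_of_nonneg hb, hnmp]
    have hdir : ‖(1 - b) • p + b • m - p‖⁻¹ • ((1 - b) • p + b • m - p)
        = r⁻¹ • (m - p) := by
      rw [hnx, hxpb, smul_smul]
      congr 1
      field_simp
    rw [hl, hdir]
    have hub : ∀ t ∈ {t : ℝ | 0 ≤ t ∧ p + t • (r⁻¹ • (m - p)) ∈ C p}, t ≤ r := by
      rintro t ⟨ht0, htC⟩
      rw [hC] at htC
      have hqc := htC q hq
      have h1 : dist (p + t • (r⁻¹ • (m - p))) p = t := by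
        rw [dist_eq_norm]
        have : p + t • (r⁻¹ • (m - p)) - p = (t * r⁻¹) • (m - p) := by
          rw [smul_smul]; module
        rw [this, norm_smul, hnmp, Real.norm_of_nonneg (by positivity)]
        field_simp
      have h2 : dist (p + t • (r⁻¹ • (m - p))) q = |t - 2 * r| := by
        rw [dist_eq_norm]
        have : p + t • (r⁻¹ • (m - p)) - q = (t * r⁻¹ - 2) • (m - p) := by
          have : q = p + (2:ℝ) • (m - p) := by rw [← hq2]; module
          rw [this]; module
        rw [this, norm_smul, hnmp, Real.norm_eq_abs]
        rw [show t - 2 * r = (t * r⁻¹ - 2) * r by field_simp, abs_mul,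
          abs_of_pos hr]
      rw [h1, h2] at hqc
      rcases le_abs.mp hqc with h | h
      · linarith
      · linarith
    have hrS : r ∈ {t : ℝ | 0 ≤ t ∧ p + t • (r⁻¹ • (m - p)) ∈ C p} := by
      refine ⟨hr.le, ?_⟩
      have : p + r • (r⁻¹ • (m - p)) = m := by
        rw [smul_smul, mul_inv_cancel₀ hr.ne', one_smul]
        module
      rw [this]
      exact hmem.1
    exact le_antisymm (csSup_le ⟨r, hrS⟩ hub) (le_csSup ⟨r, hub⟩ hrS)
  -- β r < 0
  have hβr : β r < 0 := by
    by_contra hbnn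
    push_neg at hbnn
    have hint := hβ r hr
    have hInt : IntegrableOn (fun t => t ^ (n - 1) * K (β r * t)) (Set.Ioo 0 r) := by
      by_contra h
      rw [MeasureTheory.integral_undef h] at hint
      linarith
    have hInt2 : IntegrableOn (fun t : ℝ => t ^ (n - 1)) (Set.Ioo 0 r) :=
      ((continuous_pow (n - 1)).integrableOn_Icc).mono_set Set.Ioo_subset_Icc_self
    have hle : ∫ t in Set.Ioo 0 r, t ^ (n - 1) * K (β r * t)
        ≤ ∫ t in Set.Ioo 0 r, t ^ (n - 1) := by
      refine MeasureTheory.setIntegral_mono_on hInt hInt2 measurableSet_Ioo ?_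
      intro t ht
      have ht0 : 0 < t := ht.1
      have hKle : K (β r * t) ≤ 1 := by
        rw [← hK0]
        exact hKanti.antitoneOn (Set.mem_Ioi.mpr hA)
          (Set.mem_Ioi.mpr (lt_of_lt_of_le hA (by positivity))) (by positivity)
      calc t ^ (n - 1) * K (β r * t) ≤ t ^ (n - 1) * 1 :=
            mul_le_mul_of_nonneg_left hKle (by positivity)
        _ = t ^ (n - 1) := mul_one _
    have hpowint : ∫ t in Set.Ioo 0 r, t ^ (n - 1) = r ^ n / n := by
      rw [← MeasureTheory.integral_Ioc_eq_integral_Ioo,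
        ← intervalIntegral.integral_of_le hr.le, integral_pow,
        show n - 1 + 1 = n from Nat.succ_pred_eq_of_pos hn]
      rw [zero_pow (by omega), Nat.cast_sub hn]
      push_cast
      ring
    rw [hint, hpowint] at hle
    have hna : (0:ℝ) < (n : ℝ) * α := by
      have : (0:ℝ) < (n:ℝ) := by exact_mod_cast hn
      positivity
    have hnr : (n:ℝ) * α ≤ r ^ n := by
      have : (0:ℝ) < (n:ℝ) := by exact_mod_cast hn
      rw [le_div_iff₀ this] at hle
      nlinarith
    have hεr : ε ≤ r := by
      rw [hε]
      calc ((n:ℝ) * α) ^ ((n:ℝ)⁻¹) ≤ (r ^ n) ^ ((n:ℝ)⁻¹) :=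
            Real.rpow_le_rpow hna.le hnr (by positivity)
        _ = r := by
            rw [← Real.rpow_natCast r n, ← Real.rpow_mul hr.le,
              mul_inv_cancel₀ ((Nat.cast_pos.mpr hn).ne' : (n:ℝ) ≠ 0), Real.rpow_one]
    linarith
  have hbA : A < β r * r := (div_lt_iff₀ hr).mp (hβdom r hr)
  -- dist bound on segment
  have hdistseg : ∀ x ∈ segment ℝ p m, dist x p ≤ r := by
    intro x hx
    obtain ⟨a, b, ha, hb, hab, rfl⟩ := hx
    have haeq : a = 1 - b := by linarith
    subst haeq
    have hxpb : (1 - b) • p + b • m - p = b • (m - p) := by module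
    rw [dist_eq_norm, hxpb, norm_smul, Real.norm_of_nonneg hb, hnmp]
    nlinarith
  -- uniform formula for f on the segment
  have hfx : ∀ x ∈ segment ℝ p m, f x = K (β r * dist x p) / (α * (P.card : ℝ) * V) := by
    intro x hx
    by_cases hxp : x = p
    · subst hxp
      rw [hf]
      simp [dist_self]
    · rw [hf, hlx x hx hxp]
  -- monotonicity
  have hmono : ∀ x ∈ segment ℝ p m, ∀ y ∈ segment ℝ p m,
      dist x p < dist y p → f x < f y := by
    intro x hx y hy hxy
    rw [hfx x hx, hfx y hy]
    have hdx0 : 0 ≤ dist x p := dist_nonneg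
    have hdyr : dist y p ≤ r := hdistseg y hy
    have hay : β r * r ≤ β r * dist y p := mul_le_mul_of_nonpos_left hdyr hβr.le
    have haymem : β r * dist y p ∈ Set.Ioi A :=
      Set.mem_Ioi.mpr (lt_of_lt_of_le hbA hay)
    have harg : β r * dist y p < β r * dist x p := mul_lt_mul_of_neg_left hxy hβr
    have haxmem : β r * dist x p ∈ Set.Ioi A :=
      Set.mem_Ioi.mpr (lt_trans (Set.mem_Ioi.mp haymem) harg)
    have hK : K (β r * dist x p) < K (β r * dist y p) := hKanti haymem haxmem harg
    exact div_lt_div_of_pos_right hK hD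
  refine ⟨?_, hmono, ?_⟩
  · intro x hx hxp
    rw [hlx x hx hxp]
    exact ⟨rfl, hrε, hβr⟩
  · apply hmono p (left_mem_segment ℝ p m) m (right_mem_segment ℝ p m)
    rw [dist_self, dist_eq_norm, hnmp]
    exact hr
end
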